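/- Let Σ = diag(σ₁, …, σ_r) with σ₁ ≥ … ≥ σ_r ≥ 0 (padded with zeros to an m×n matrix) and let Q ∈ ℝ^{m×n} satisfy rank(Q) ≤ k and ‖Q‖₂ ≤ τ. Then tr(ΣᵀQ) ≤ τ·Σ_{i=1}^{min(k,r)} σᵢ, with equality when Q = τ·diag(1,…,1,0,…,0) with min(k,r) ones. -/

import Mathlib

open Matrix BigOperators

noncomputable def specNorm {m n : ℕ} (A : Matrix (Fin m) (Fin n) ℝ) : ℝ :=
  ‖LinearMap.toContinuousLinearMap (Matrix.toEuclideanLin A)‖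

noncomputable def rmsNorm {d : ℕ} (x : Fin d → ℝ) : ℝ :=
  Real.sqrt (∑ i, x i ^ 2) / Real.sqrt d

noncomputable def rmsOpNorm {m n : ℕ} (A : Matrix (Fin m) (Fin n) ℝ) : ℝ :=
  ⨆ x : {x : Fin n → ℝ // x ≠ 0}, rmsNorm (A.mulVec x.1) / rmsNorm x.1

noncomputable def padDiag (m n : ℕ) {r : ℕ} (σ : Fin r → ℝ) : Matrix (Fin m) (Fin n) ℝ :=
  Matrix.of fun i j => if h : (i : ℕ) = (j : ℕ) ∧ (i : ℕ) < r then σ ⟨(i : ℕ), h.2⟩ else 0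

noncomputable def frobNorm {m n : ℕ} (A : Matrix (Fin m) (Fin n) ℝ) : ℝ :=
  Real.sqrt (∑ i, ∑ j, A i j ^ 2)

noncomputable def frobSq {m n : ℕ} (A : Matrix (Fin m) (Fin n) ℝ) : ℝ :=
  ∑ i, ∑ j, A i j ^ 2


open Finset in
lemma specNorm_nonneg {m n : ℕ} (A : Matrix (Fin m) (Fin n) ℝ) : 0 ≤ specNorm A :=
  norm_nonneg _

lemma norm_mulVec_le {m n : ℕ} (A : Matrix (Fin m) (Fin n) ℝ) (x : Fin n → ℝ) :
    Real.sqrt (∑ i, (A.mulVec x i)^2) ≤ specNorm A * Real.sqrt (∑ j, (x j)^2) := by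
  set T := LinearMap.toContinuousLinearMap (Matrix.toEuclideanLin A) with hT
  set x' : EuclideanSpace ℝ (Fin n) := (WithLp.equiv 2 _).symm x with hx'
  have h := T.le_opNorm x'
  have h1 : ‖T x'‖ = Real.sqrt (∑ i, (A.mulVec x i)^2) := by
    rw [EuclideanSpace.norm_eq]
    congr 1
    apply Finset.sum_congr rfl
    intro i _
    have : T x' i = A.mulVec x i := by
      simp [hT, hx', Matrix.toEuclideanLin_toLp, Matrix.toLin'_apply]
    rw [this, Real.norm_eq_abs, sq_abs]
  have h2 : ‖x'‖ = Real.sqrt (∑ j, (x j)^2) := by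
    rw [EuclideanSpace.norm_eq]
    congr 1
    apply Finset.sum_congr rfl
    intro j _
    rw [Real.norm_eq_abs, sq_abs]
    rfl
  rw [h1, h2] at h
  exact h

lemma entry_le_specNorm {m n : ℕ} (A : Matrix (Fin m) (Fin n) ℝ) (i : Fin m) (j : Fin n) :
    |A i j| ≤ specNorm A := by
  have h := norm_mulVec_le A ((Pi.single j 1 : Fin n → ℝ))
  have hs : (∑ t, ((Pi.single j 1 : Fin n → ℝ) t)^2) = 1 := by
    rw [Finset.sum_eq_single j] <;> simp (config := {contextual := true}) [Pi.single_apply]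
  rw [hs, Real.sqrt_one, mul_one] at h
  have hv : A.mulVec ((Pi.single j 1 : Fin n → ℝ)) i = A i j := by
    simp [Matrix.mulVec_single]
  calc |A i j| = Real.sqrt ((A.mulVec ((Pi.single j 1 : Fin n → ℝ)) i)^2) := by
        rw [hv, Real.sqrt_sq_eq_abs]
    _ ≤ Real.sqrt (∑ t, (A.mulVec ((Pi.single j 1 : Fin n → ℝ)) t)^2) := by
        apply Real.sqrt_le_sqrt
        exact Finset.single_le_sum (f := fun t => (A.mulVec ((Pi.single j 1 : Fin n → ℝ)) t)^2)
          (fun t _ => sq_nonneg _) (Finset.mem_univ i)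
    _ ≤ specNorm A := h

lemma specNorm_transpose {m n : ℕ} (A : Matrix (Fin m) (Fin n) ℝ) :
    specNorm Aᵀ = specNorm A := by
  have hA : Aᵀ = Aᴴ := by ext i j; simp [Matrix.conjTranspose_apply]
  unfold specNorm
  rw [hA, Matrix.toEuclideanLin_conjTranspose_eq_adjoint, LinearMap.adjoint_toContinuousLinearMap]
  exact (ContinuousLinearMap.adjoint : _ ≃ₗᵢ⋆[ℝ] _).norm_map _

lemma finrank_range_toEuclideanLin {m n : ℕ} (Q : Matrix (Fin m) (Fin n) ℝ) :
    Module.finrank ℝ (LinearMap.range (Matrix.toEuclideanLin Q)) = Q.rank := by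
  have h : Matrix.toEuclideanLin Q =
      ((WithLp.linearEquiv 2 ℝ (Fin m → ℝ)).symm.toLinearMap.comp Q.mulVecLin).comp
        (WithLp.linearEquiv 2 ℝ (Fin n → ℝ)).toLinearMap := by
    ext x; rfl
  rw [h, LinearMap.range_comp_of_range_eq_top _ (LinearEquiv.range _), LinearMap.range_comp]
  exact LinearEquiv.finrank_map_eq _ _

open Finset in
lemma sum_diag_le_rank_mul {m n k : ℕ} (Q : Matrix (Fin m) (Fin n) ℝ) (τ : ℝ) (hτ : 0 ≤ τ)
    (hrank : Q.rank ≤ k) (hspec : specNorm Q ≤ τ) (L : ℕ) (hLm : L ≤ m) (hLn : L ≤ n) :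
    ∑ i : Fin L, Q (Fin.castLE hLm i) (Fin.castLE hLn i) ≤ τ * k := by
  classical
  set V : Submodule ℝ (EuclideanSpace ℝ (Fin m)) := LinearMap.range (Matrix.toEuclideanLin Q)
    with hV
  set ρ := Module.finrank ℝ V with hρ
  have hρk : ρ ≤ k := by rw [hρ, hV, finrank_range_toEuclideanLin]; exact hrank
  set b := stdOrthonormalBasis ℝ V with hb
  set w : Fin ρ → (Fin m → ℝ) := fun a => ((b a : EuclideanSpace ℝ (Fin m)) : Fin m → ℝ) with hw
  have hwnorm : ∀ a, ∑ s, (w a s)^2 = 1 := by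
    intro a
    have h1 : ‖(b a : EuclideanSpace ℝ (Fin m))‖ = 1 := b.orthonormal.1 a
    have h2 := EuclideanSpace.norm_eq (𝕜 := ℝ) ((b a : EuclideanSpace ℝ (Fin m)))
    rw [h1] at h2
    have h3 := congrArg (· ^ 2) h2
    simp only [one_pow,
      Real.sq_sqrt (by positivity : (0:ℝ) ≤ ∑ i, ‖(b a : EuclideanSpace ℝ (Fin m)) i‖^2)] at h3
    rw [show ∑ s, (w a s)^2 = ∑ i, ‖(b a : EuclideanSpace ℝ (Fin m)) i‖^2 from
      Finset.sum_congr rfl fun s _ => by rw [Real.norm_eq_abs, sq_abs]]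
    exact h3.symm
  have key : ∀ i : Fin L, Q (Fin.castLE hLm i) (Fin.castLE hLn i) =
      ∑ a, (Qᵀ.mulVec (w a) (Fin.castLE hLn i)) * w a (Fin.castLE hLm i) := by
    intro i
    set j := Fin.castLE hLn i
    set t := Fin.castLE hLm i
    set u : EuclideanSpace ℝ (Fin n) := (WithLp.equiv 2 _).symm (Pi.single j 1) with hu
    set z : V := ⟨Matrix.toEuclideanLin Q u, LinearMap.mem_range_self _ u⟩ with hz
    have hzc : ∀ s, (Matrix.toEuclideanLin Q u) s = Q s j := by
      intro s
      have : Matrix.toEuclideanLin Q u = (WithLp.equiv 2 (Fin m → ℝ)).symm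
          (Q.mulVec (Pi.single j 1)) := by
        rw [hu]; rfl
      rw [this]
      show Q.mulVec (Pi.single j 1) s = Q s j
      simp [Matrix.mulVec_single]
    have hcoord : (Matrix.toEuclideanLin Q u) t
        = ∑ a, b.repr z a * w a t := by
      show (z : EuclideanSpace ℝ (Fin m)) t = _
      conv_lhs => rw [← b.sum_repr z]
      push_cast
      rw [WithLp.ofLp_sum, Finset.sum_apply]
      simp [PiLp.smul_apply, hw]
    have hrep : ∀ a, b.repr z a = Qᵀ.mulVec (w a) j := by
      intro a
      rw [b.repr_apply_apply]
      rw [show (inner ℝ (b a) z : ℝ) =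
        inner ℝ ((b a : EuclideanSpace ℝ (Fin m))) (z : EuclideanSpace ℝ (Fin m)) from rfl]
      rw [PiLp.inner_apply]
      simp only [RCLike.inner_apply, starRingEnd_apply, star_trivial]
      rw [Matrix.mulVec]
      show _ = ∑ s, Qᵀ j s * w a s
      apply Finset.sum_congr rfl
      intro s _
      rw [hzc s, Matrix.transpose_apply]
    rw [← hzc t, hcoord]
    exact Finset.sum_congr rfl fun a _ => by rw [hrep a]
  rw [Finset.sum_congr rfl fun i _ => key i, Finset.sum_comm]
  have habound : ∀ a : Fin ρ,
      ∑ i : Fin L, (Qᵀ.mulVec (w a) (Fin.castLE hLn i)) * w a (Fin.castLE hLm i) ≤ τ := by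
    intro a
    set f : Fin L → ℝ := fun i => Qᵀ.mulVec (w a) (Fin.castLE hLn i)
    set g : Fin L → ℝ := fun i => w a (Fin.castLE hLm i)
    have cs := Finset.sum_mul_sq_le_sq_mul_sq Finset.univ f g
    have hf : ∑ i, (f i)^2 ≤ τ^2 := by
      have hsub : ∑ i : Fin L, (f i)^2 ≤ ∑ j : Fin n, (Qᵀ.mulVec (w a) j)^2 := by
        rw [show ∑ i : Fin L, (f i)^2
            = ∑ j ∈ Finset.univ.map (Fin.castLEEmb hLn), (Qᵀ.mulVec (w a) j)^2 by
          rw [Finset.sum_map]; rfl]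
        exact Finset.sum_le_sum_of_subset_of_nonneg (Finset.subset_univ _)
          (fun _ _ _ => sq_nonneg _)
      have hnb := norm_mulVec_le Qᵀ (w a)
      rw [specNorm_transpose] at hnb
      rw [hwnorm a, Real.sqrt_one, mul_one] at hnb
      have hnb2 : Real.sqrt (∑ j, (Qᵀ.mulVec (w a) j)^2) ≤ τ := hnb.trans hspec
      have := Real.sq_sqrt (by positivity : (0:ℝ) ≤ ∑ j, (Qᵀ.mulVec (w a) j)^2)
      nlinarith [Real.sqrt_nonneg (∑ j, (Qᵀ.mulVec (w a) j)^2)]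
    have hg : ∑ i, (g i)^2 ≤ 1 := by
      rw [← hwnorm a]
      rw [show ∑ i : Fin L, (g i)^2
          = ∑ s ∈ Finset.univ.map (Fin.castLEEmb hLm), (w a s)^2 by
        rw [Finset.sum_map]; rfl]
      exact Finset.sum_le_sum_of_subset_of_nonneg (Finset.subset_univ _)
        (fun _ _ _ => sq_nonneg _)
    have hsq : (∑ i, f i * g i)^2 ≤ τ^2 := by
      calc (∑ i, f i * g i)^2 ≤ (∑ i, (f i)^2) * (∑ i, (g i)^2) := cs
        _ ≤ τ^2 * 1 := by
            apply mul_le_mul hf hg (Finset.sum_nonneg fun _ _ => sq_nonneg _) (by positivity)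
        _ = τ^2 := mul_one _
    calc ∑ i, f i * g i ≤ |∑ i, f i * g i| := le_abs_self _
      _ = Real.sqrt ((∑ i, f i * g i)^2) := (Real.sqrt_sq_eq_abs _).symm
      _ ≤ Real.sqrt (τ^2) := Real.sqrt_le_sqrt hsq
      _ = τ := Real.sqrt_sq hτ
  calc ∑ a : Fin ρ, ∑ i : Fin L, (Qᵀ.mulVec (w a) (Fin.castLE hLn i)) * w a (Fin.castLE hLm i)
      ≤ ∑ _a : Fin ρ, τ := Finset.sum_le_sum fun a _ => habound a
    _ = ρ * τ := by rw [Finset.sum_const, Finset.card_univ, Fintype.card_fin, nsmul_eq_mul]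
    _ ≤ τ * k := by
        rw [mul_comm]
        exact mul_le_mul_of_nonneg_left (by exact_mod_cast hρk) hτ

open Finset in
lemma abel_identity (a d : ℕ → ℝ) : ∀ N : ℕ, ∑ j ∈ range N, a j * d j =
    (∑ l ∈ range N, (a l - a (l+1)) * (∑ i ∈ range (l+1), d i)) +
      a N * (∑ i ∈ range N, d i) := by
  intro N
  induction N with
  | zero => simp
  | succ N ih =>
    rw [Finset.sum_range_succ, ih, Finset.sum_range_succ (fun l => (a l - a (l+1)) * _)]
    rw [Finset.sum_range_succ d]
    ring

open Finset in
lemma abel_compare (a c d : ℕ → ℝ) (N : ℕ)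
    (ha : ∀ l, l < N → a (l+1) ≤ a l) (haN : a N = 0)
    (hS : ∀ l, l ≤ N → ∑ i ∈ range l, d i ≤ ∑ i ∈ range l, c i) :
    ∑ j ∈ range N, a j * d j ≤ ∑ j ∈ range N, a j * c j := by
  rw [abel_identity a d N, abel_identity a c N, haN, zero_mul, zero_mul, add_zero, add_zero]
  apply Finset.sum_le_sum
  intro l hl
  rw [Finset.mem_range] at hl
  apply mul_le_mul_of_nonneg_left (hS (l+1) hl) (by linarith [ha l hl])

open Finset in
lemma sum_ite_lt (τ : ℝ) (l t : ℕ) :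
    ∑ j ∈ range l, (if j < t then τ else 0) = (min l t : ℕ) * τ := by
  induction l with
  | zero => simp
  | succ l ih =>
    rw [Finset.sum_range_succ, ih]
    rcases lt_or_ge l t with h | h
    · rw [if_pos h]
      have : min (l+1) t = min l t + 1 := by omega
      rw [this]; push_cast; ring
    · rw [if_neg (by omega)]
      have : min (l+1) t = min l t := by omega
      rw [this, add_zero]

lemma mem_castLEEmb {n r : ℕ} (hrn : r ≤ n) (j : Fin n) :
    j ∈ Finset.univ.map (Fin.castLEEmb hrn) ↔ (j : ℕ) < r := by
  simp only [Finset.mem_map, Finset.mem_univ, true_and]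
  constructor
  · rintro ⟨i, rfl⟩; exact i.isLt
  · intro h; exact ⟨⟨(j : ℕ), h⟩, Fin.ext rfl⟩

lemma trace_padDiag_mul {m n r : ℕ} (hrm : r ≤ m) (hrn : r ≤ n) (σ : Fin r → ℝ)
    (Q : Matrix (Fin m) (Fin n) ℝ) :
    Matrix.trace ((padDiag m n σ)ᵀ * Q) =
      ∑ i : Fin r, σ i * Q (Fin.castLE hrm i) (Fin.castLE hrn i) := by
  have step1 : Matrix.trace ((padDiag m n σ)ᵀ * Q) =
      ∑ j : Fin n, ∑ i : Fin m, padDiag m n σ i j * Q i j := by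
    simp [Matrix.trace, Matrix.mul_apply, Matrix.diag, Matrix.transpose_apply]
  rw [step1]
  have hg0 : ∀ j : Fin n, ¬ ((j : ℕ) < r) → ∑ i : Fin m, padDiag m n σ i j * Q i j = 0 := by
    intro j hj
    apply Finset.sum_eq_zero
    intro i _
    rw [show padDiag m n σ i j = 0 from dif_neg (by rintro ⟨h1, h2⟩; omega), zero_mul]
  rw [← Finset.sum_subset (Finset.subset_univ (Finset.univ.map (Fin.castLEEmb hrn)))
    (fun j _ hj => hg0 j (by rwa [← mem_castLEEmb hrn]))]
  rw [Finset.sum_map]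
  apply Finset.sum_congr rfl
  intro i _
  rw [Finset.sum_eq_single (Fin.castLE hrm i)]
  · have hp : ((Fin.castLE hrm i : Fin m) : ℕ) = ((Fin.castLEEmb hrn i : Fin n) : ℕ) ∧
        ((Fin.castLE hrm i : Fin m) : ℕ) < r := ⟨rfl, i.isLt⟩
    rw [show padDiag m n σ (Fin.castLE hrm i) (Fin.castLEEmb hrn i) = σ i from by
      simp only [padDiag, Matrix.of_apply]
      rw [dif_pos hp]
      exact congrArg σ (Fin.ext rfl)]
    rfl
  · intro i' _ hne
    rw [show padDiag m n σ i' (Fin.castLEEmb hrn i) = 0 from by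
      simp only [padDiag, Matrix.of_apply]
      refine dif_neg ?_
      rintro ⟨h1, h2⟩
      exact hne (Fin.ext (by simpa using h1))]
    rw [zero_mul]
  · intro h
    exact absurd (Finset.mem_univ _) h


theorem stmt7 {m n r k : ℕ} (hr : r ≤ min m n) (τ : ℝ) (hτ : 0 ≤ τ)
    (σ : Fin r → ℝ) (hσanti : Antitone σ) (hσpos : ∀ i, 0 ≤ σ i)
    (Q : Matrix (Fin m) (Fin n) ℝ)
    (hrank : Q.rank ≤ k) (hspec : specNorm Q ≤ τ) :
    Matrix.trace ((padDiag m n σ)ᵀ * Q) ≤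
      τ * ∑ i : Fin r, (if (i : ℕ) < k then σ i else 0) ∧
    Matrix.trace ((padDiag m n σ)ᵀ *
        (τ • padDiag m n (fun i : Fin r => if (i : ℕ) < k then (1 : ℝ) else 0))) =
      τ * ∑ i : Fin r, (if (i : ℕ) < k then σ i else 0) := by
  have hrm : r ≤ m := hr.trans (min_le_left _ _)
  have hrn : r ≤ n := hr.trans (min_le_right _ _)
  constructor
  · -- the inequality
    rw [trace_padDiag_mul hrm hrn]
    set a : ℕ → ℝ := fun j => if h : j < r then σ ⟨j, h⟩ else 0 with ha
    set d : ℕ → ℝ := fun j => if h : j < r then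
        Q ⟨j, lt_of_lt_of_le h hrm⟩ ⟨j, lt_of_lt_of_le h hrn⟩ else 0 with hd
    set c : ℕ → ℝ := fun j => if j < min k r then τ else 0 with hc
    have e1 : ∑ i : Fin r, σ i * Q (Fin.castLE hrm i) (Fin.castLE hrn i)
        = ∑ j ∈ Finset.range r, a j * d j := by
      rw [← Fin.sum_univ_eq_sum_range (fun j => a j * d j) r]
      apply Finset.sum_congr rfl
      intro i _
      rw [ha, hd]
      simp only
      rw [dif_pos i.isLt, dif_pos i.isLt]
      rfl
    have e2 : τ * ∑ i : Fin r, (if (i : ℕ) < k then σ i else 0)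
        = ∑ j ∈ Finset.range r, a j * c j := by
      rw [Finset.mul_sum, ← Fin.sum_univ_eq_sum_range (fun j => a j * c j) r]
      apply Finset.sum_congr rfl
      intro i _
      rw [ha, hc]
      simp only
      rw [dif_pos i.isLt]
      by_cases hik : (i : ℕ) < k
      · rw [if_pos hik, if_pos (lt_min hik i.isLt), mul_comm]
      · rw [if_neg hik, if_neg (by omega : ¬ (i : ℕ) < min k r), mul_zero, mul_zero]
    rw [e1, e2]
    apply abel_compare
    · intro l hl
      rw [ha]
      simp only
      by_cases h1 : l + 1 < r
      · rw [dif_pos h1, dif_pos hl]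
        exact hσanti (by exact Fin.mk_le_mk.mpr (Nat.le_succ l))
      · rw [dif_neg h1, dif_pos hl]
        exact hσpos _
    · rw [ha]; simp
    · intro l hl
      have hlm : l ≤ m := le_trans hl hrm
      have hln : l ≤ n := le_trans hl hrn
      have hdl : ∑ j ∈ Finset.range l, d j
          = ∑ i : Fin l, Q (Fin.castLE hlm i) (Fin.castLE hln i) := by
        rw [← Fin.sum_univ_eq_sum_range (fun j => d j) l]
        apply Finset.sum_congr rfl
        intro i _
        rw [hd]
        simp only
        rw [dif_pos (lt_of_lt_of_le i.isLt hl)]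
        rfl
      have hcl : ∑ j ∈ Finset.range l, c j = (min l (min k r) : ℕ) * τ := by
        rw [hc]
        exact sum_ite_lt τ l (min k r)
      rw [hdl, hcl]
      have hmin : min l (min k r) = min l k := by omega
      rw [hmin]
      rcases le_or_gt l k with hlk | hkl
      · have h2 : min l k = l := by omega
        rw [h2]
        calc ∑ i : Fin l, Q (Fin.castLE hlm i) (Fin.castLE hln i)
            ≤ ∑ _i : Fin l, τ := Finset.sum_le_sum fun i _ =>
              le_trans (le_abs_self _) (le_trans (entry_le_specNorm Q _ _) hspec)
          _ = (l : ℕ) * τ := by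
              rw [Finset.sum_const, Finset.card_univ, Fintype.card_fin, nsmul_eq_mul]
      · have h2 : min l k = k := by omega
        rw [h2, mul_comm]
        exact sum_diag_le_rank_mul Q τ hτ hrank hspec l hlm hln
  · -- the equality
    rw [trace_padDiag_mul hrm hrn, Finset.mul_sum]
    apply Finset.sum_congr rfl
    intro i _
    have hentry : (τ • padDiag m n (fun i : Fin r => if (i : ℕ) < k then (1 : ℝ) else 0))
        (Fin.castLE hrm i) (Fin.castLE hrn i) = τ * (if (i : ℕ) < k then (1 : ℝ) else 0) := by
      simp only [Matrix.smul_apply, padDiag, Matrix.of_apply, smul_eq_mul]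
      rw [dif_pos ⟨rfl, i.isLt⟩]
      rfl
    rw [hentry]
    split_ifs <;> ring
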